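/- For every n ≥ 1, t > 0 and b > 0 there exists a constant c_1 > 0 depending only on n, t and b with the following property. Let E ⊆ ℝ^n be the image of the closed unit ball under an invertible linear map (an ellipsoid centered at the origin), let Ω be an open bounded convex set with tE ⊆ Ω ⊆ E, and let v be a convex function on the closure of Ω with v = 0 on ∂Ω and μ_v(Ω) < ∞. If μ_v(tΩ) ≥ b·μ_v(Ω), then |v(0)| ≥ c_1 · H^n(Ω)^{1/n} · μ_v(Ω)^{1/n}. -/

import Mathlib

open MeasureTheory Set
open scoped ENNReal NNReal RealInnerProductSpace

noncomputable section

/-- Support function of a set `K`. -/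
def suppFn {n : ℕ} (K : Set (EuclideanSpace ℝ (Fin n))) (u : EuclideanSpace ℝ (Fin n)) : ℝ :=
  sSup ((fun y => ⟪u, y⟫) '' K)

/-- Face of `K` with outer normal `u`. -/
def face {n : ℕ} (K : Set (EuclideanSpace ℝ (Fin n))) (u : EuclideanSpace ℝ (Fin n)) :
    Set (EuclideanSpace ℝ (Fin n)) :=
  {z ∈ K | ⟪z, u⟫ = suppFn K u}

/-- Normal cone of `K` at `z`. -/
def normalCone {n : ℕ} (K : Set (EuclideanSpace ℝ (Fin n))) (z : EuclideanSpace ℝ (Fin n)) :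
    Set (EuclideanSpace ℝ (Fin n)) :=
  {u | ∀ y ∈ K, ⟪u, y⟫ ≤ ⟪u, z⟫}

/-- The unit sphere `S^{n-1}` in `ℝ^n`. -/
def unitSphere (n : ℕ) : Set (EuclideanSpace ℝ (Fin n)) :=
  Metric.sphere (0 : EuclideanSpace ℝ (Fin n)) 1

/-- Surface area measure of `K` evaluated on `ω`:
`S_K(ω) = H^{n-1}(⋃_{u ∈ ω} F(K,u))`. -/
def surfMeas {n : ℕ} (K : Set (EuclideanSpace ℝ (Fin n)))
    (ω : Set (EuclideanSpace ℝ (Fin n))) : ℝ≥0∞ :=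
  μH[(n : ℝ) - 1] (⋃ u ∈ ω, face K u)

/-- `K ∈ 𝒦₀ⁿ`: compact convex with nonempty interior, containing the origin. -/
def IsConvexBody0 {n : ℕ} (K : Set (EuclideanSpace ℝ (Fin n))) : Prop :=
  IsCompact K ∧ Convex ℝ K ∧ (interior K).Nonempty ∧ (0 : EuclideanSpace ℝ (Fin n)) ∈ K

/-- `K` is a solution of the `L_p` Minkowski problem `dS_{K,p} = f dH^{n-1}`. -/
def IsLpSolution {n : ℕ} (p : ℝ) (f : EuclideanSpace ℝ (Fin n) → ℝ)
    (K : Set (EuclideanSpace ℝ (Fin n))) : Prop :=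
  μH[(n : ℝ) - 1] {u ∈ unitSphere n | suppFn K u = 0} = 0 ∧
  ∀ ω : Set (EuclideanSpace ℝ (Fin n)), MeasurableSet ω →
    ω ⊆ {u ∈ unitSphere n | 0 < suppFn K u} →
    surfMeas K ω
      = ∫⁻ u in ω, ENNReal.ofReal ((n : ℝ) * f u * suppFn K u ^ (p - 1)) ∂μH[(n : ℝ) - 1]

/-- `x` is a smooth boundary point: the normal cone spans a one-dimensional space. -/
def IsSmoothPt {n : ℕ} (K : Set (EuclideanSpace ℝ (Fin n)))
    (x : EuclideanSpace ℝ (Fin n)) : Prop :=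
  Module.finrank ℝ (Submodule.span ℝ (normalCone K x)) = 1

/-- `K` is smooth: every boundary point is a smooth point. -/
def IsSmoothBody {n : ℕ} (K : Set (EuclideanSpace ℝ (Fin n))) : Prop :=
  ∀ x ∈ frontier K, IsSmoothPt K x

/-- Subgradient of `v` at `x` relative to the domain `Ω`. -/
def subgrad {n : ℕ} (Ω : Set (EuclideanSpace ℝ (Fin n))) (v : EuclideanSpace ℝ (Fin n) → ℝ)
    (x : EuclideanSpace ℝ (Fin n)) : Set (EuclideanSpace ℝ (Fin n)) :=
  {z | ∀ y ∈ Ω, v x + ⟪z, y - x⟫ ≤ v y}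

/-- Monge–Ampère measure of `v` (relative to domain `Ω`) evaluated on `ω`. -/
def maMeasure {n : ℕ} (Ω : Set (EuclideanSpace ℝ (Fin n))) (v : EuclideanSpace ℝ (Fin n) → ℝ)
    (ω : Set (EuclideanSpace ℝ (Fin n))) : ℝ≥0∞ :=
  μH[(n : ℝ)] (⋃ x ∈ ω, subgrad Ω v x)

/-- Hessian matrix of `v : ℝ^n → ℝ` at `x`. -/
def hessMatrix {n : ℕ} (v : EuclideanSpace ℝ (Fin n) → ℝ) (x : EuclideanSpace ℝ (Fin n)) :
    Matrix (Fin n) (Fin n) ℝ :=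
  Matrix.of fun i j =>
    fderiv ℝ (fun y => fderiv ℝ v y (EuclideanSpace.single j 1)) x (EuclideanSpace.single i 1)

open scoped Pointwise


lemma convex_nonpos_of_zero_frontier {n : ℕ} (hn : 1 ≤ n) {Ω : Set (EuclideanSpace ℝ (Fin n))}
    (hΩo : IsOpen Ω) (hΩb : Bornology.IsBounded Ω)
    {v : EuclideanSpace ℝ (Fin n) → ℝ} (hv : ConvexOn ℝ (closure Ω) v)
    (hvb : ∀ x ∈ frontier Ω, v x = 0) :
    ∀ x ∈ Ω, v x ≤ 0 := by
  intro x hx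
  set u : EuclideanSpace ℝ (Fin n) := EuclideanSpace.single ⟨0, hn⟩ 1 with hu
  have hun : ‖u‖ = 1 := by simp [hu]
  set S : Set ℝ := {s : ℝ | x + s • u ∈ closure Ω} with hS
  have hScl : IsClosed S := by
    have : Continuous fun s : ℝ => x + s • u := by continuity
    exact IsClosed.preimage this isClosed_closure
  have h0S : (0 : ℝ) ∈ S := by
    simp only [hS, mem_setOf_eq, zero_smul, add_zero]
    exact subset_closure hx
  obtain ⟨C, hC⟩ := isBounded_iff_forall_norm_le.1 hΩb.closure
  have habs : ∀ s ∈ S, |s| ≤ C + ‖x‖ := by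
    intro s hs
    have h1 : ‖x + s • u‖ ≤ C := hC _ hs
    have h2 : |s| = ‖s • u‖ := by rw [norm_smul, hun, mul_one, Real.norm_eq_abs]
    have h3 : s • u = (x + s • u) - x := by abel
    rw [h2, h3]
    calc ‖(x + s • u) - x‖ ≤ ‖x + s • u‖ + ‖x‖ := norm_sub_le _ _
      _ ≤ C + ‖x‖ := by linarith
  have hbddA : BddAbove S := ⟨C + ‖x‖, fun s hs => (le_abs_self s).trans (habs s hs)⟩
  have hbddB : BddBelow S := ⟨-(C + ‖x‖), fun s hs => by
    have := habs s hs
    have := neg_abs_le s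
    linarith⟩
  obtain ⟨ε, hε, hball⟩ := Metric.isOpen_iff.1 hΩo x hx
  have hsmall : ∀ s : ℝ, |s| < ε → s ∈ S := by
    intro s hs
    refine subset_closure (hball ?_)
    rw [Metric.mem_ball, dist_eq_norm]
    simpa [norm_smul, hun] using hs
  set p := sSup S with hp
  set m := sInf S with hm
  have hpS : p ∈ S := hScl.csSup_mem ⟨0, h0S⟩ hbddA
  have hmS : m ∈ S := hScl.csInf_mem ⟨0, h0S⟩ hbddB
  have hppos : 0 < p := by
    have : ε / 2 ∈ S := hsmall _ (by rw [abs_of_pos (by linarith)]; linarith)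
    have := le_csSup hbddA this
    linarith
  have hmneg : m < 0 := by
    have : -(ε / 2) ∈ S := hsmall _ (by rw [abs_neg, abs_of_pos (by linarith)]; linarith)
    have := csInf_le hbddB this
    linarith
  have hfr : ∀ s : ℝ, s ∈ S → x + s • u ∉ Ω → v (x + s • u) = 0 := by
    intro s hsS hns
    apply hvb
    rw [hΩo.frontier_eq]
    exact ⟨hsS, hns⟩
  have hpub : x + p • u ∉ Ω := by
    intro hmem
    obtain ⟨δ, hδ, hball2⟩ := Metric.isOpen_iff.1 hΩo _ hmem
    have hin : p + δ / 2 ∈ S := by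
      refine subset_closure (hball2 ?_)
      rw [Metric.mem_ball, dist_eq_norm]
      have : x + (p + δ / 2) • u - (x + p • u) = (δ / 2) • u := by
        rw [add_smul]; abel
      rw [this, norm_smul, hun, mul_one, Real.norm_eq_abs, abs_of_pos (by linarith)]
      linarith
    have := le_csSup hbddA hin
    linarith
  have hmub : x + m • u ∉ Ω := by
    intro hmem
    obtain ⟨δ, hδ, hball2⟩ := Metric.isOpen_iff.1 hΩo _ hmem
    have hin : m - δ / 2 ∈ S := by
      refine subset_closure (hball2 ?_)
      rw [Metric.mem_ball, dist_eq_norm]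
      have : x + (m - δ / 2) • u - (x + m • u) = (-(δ / 2)) • u := by
        rw [sub_smul, neg_smul]; abel
      rw [this, norm_smul, hun, mul_one, Real.norm_eq_abs, abs_neg,
        abs_of_pos (by linarith)]
      linarith
    have := csInf_le hbddB hin
    linarith
  have hvp : v (x + p • u) = 0 := hfr p hpS hpub
  have hvm : v (x + m • u) = 0 := hfr m hmS hmub
  set d := p - m with hd
  have hdpos : 0 < d := by simp [hd]; linarith
  set a := p / d with ha
  set c := -m / d with hc
  have hac : a + c = 1 := by rw [ha, hc, hd, ← add_div, div_eq_one_iff_eq (by linarith)]; ring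
  have h0a : 0 ≤ a := div_nonneg hppos.le hdpos.le
  have h0c : 0 ≤ c := div_nonneg (by linarith) hdpos.le
  have hmix : a * m + c * p = 0 := by rw [ha, hc]; field_simp; ring
  have hpt : a • (x + m • u) + c • (x + p • u) = x := by
    have : a • (x + m • u) + c • (x + p • u) = (a + c) • x + (a * m + c * p) • u := by
      module
    rw [this, hac, hmix, one_smul, zero_smul, add_zero]
  have := hv.2 hmS hpS h0a h0c hac
  rw [hpt, hvp, hvm] at this
  simpa using this

/-- **Lemma 3.3 (ii) (Trudinger–Wang).** If `v` is convex on the closure of `Ω`,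
vanishes on `∂Ω`, `tE ⊆ Ω ⊆ E` for an origin-centered ellipsoid `E`, and
`μ_v(tΩ) ≥ b μ_v(Ω)`, then `|v(0)| ≥ c₁ H^n(Ω)^{1/n} μ_v(Ω)^{1/n}`. -/
theorem stmt11 (n : ℕ) (hn : 1 ≤ n) (t : ℝ) (ht : 0 < t) (b : ℝ) (hb : 0 < b) :
    ∃ c1 : ℝ, 0 < c1 ∧
      ∀ (T : EuclideanSpace ℝ (Fin n) ≃ₗ[ℝ] EuclideanSpace ℝ (Fin n))
        (E Ω : Set (EuclideanSpace ℝ (Fin n))),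
        E = T '' Metric.closedBall 0 1 →
        IsOpen Ω → Bornology.IsBounded Ω → Convex ℝ Ω →
        t • E ⊆ Ω → Ω ⊆ E →
        ∀ v : EuclideanSpace ℝ (Fin n) → ℝ, ConvexOn ℝ (closure Ω) v →
          (∀ x ∈ frontier Ω, v x = 0) →
          maMeasure Ω v Ω < ⊤ →
          ENNReal.ofReal b * maMeasure Ω v Ω ≤ maMeasure Ω v (t • Ω) →
          c1 * (μH[(n : ℝ)] Ω).toReal ^ ((1 : ℝ) / n) *
              (maMeasure Ω v Ω).toReal ^ ((1 : ℝ) / n) ≤ |v 0| := by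
  classical
  haveI : Nonempty (Fin n) := ⟨⟨0, hn⟩⟩
  haveI : Nontrivial (EuclideanSpace ℝ (Fin n)) := inferInstance
  have hfin : Module.finrank ℝ (EuclideanSpace ℝ (Fin n)) = n := finrank_euclideanSpace_fin
  haveI hHaar : Measure.IsAddHaarMeasure (μH[(n : ℝ)] : Measure (EuclideanSpace ℝ (Fin n))) := by
    rw [show ((n : ℝ)) = ((Module.finrank ℝ (EuclideanSpace ℝ (Fin n)) : ℕ) : ℝ) by rw [hfin]]
    infer_instance
  have hn0 : (n : ℝ) ≠ 0 := by positivity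
  set μB : ℝ≥0∞ := μH[(n : ℝ)] (Metric.ball (0 : EuclideanSpace ℝ (Fin n)) 1) with hμB
  have hμBpos : μB ≠ 0 := (Metric.measure_ball_pos _ _ one_pos).ne'
  have hμBne : μB ≠ ⊤ := by
    refine ne_top_of_le_ne_top ?_ (measure_mono Metric.ball_subset_closedBall)
    exact (isCompact_closedBall _ _).measure_lt_top.ne
  set volB : ℝ := μB.toReal with hvolB
  have hvolBpos : 0 < volB := ENNReal.toReal_pos hμBpos hμBne
  refine ⟨if t < 1 then t * (1 - t) / 2 * b ^ ((1 : ℝ) / n) / volB ^ ((2 : ℝ) / n) else 1,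
    ?_, ?_⟩
  · split_ifs with h
    · have h1 : 0 < t * (1 - t) / 2 := by nlinarith
      have h2 : 0 < b ^ ((1 : ℝ) / n) := Real.rpow_pos_of_pos hb _
      have h3 : 0 < volB ^ ((2 : ℝ) / n) := Real.rpow_pos_of_pos hvolBpos _
      positivity
    · exact one_pos
  intro T E Ω hE hΩo hΩb hΩc htE hΩE v hv hvb hμfin hμb
  have hEcomp : IsCompact E := by
    rw [hE]
    exact (isCompact_closedBall _ _).image (T : EuclideanSpace ℝ (Fin n) →ₗ[ℝ]
      EuclideanSpace ℝ (Fin n)).continuous_of_finiteDimensional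
  have h0E : (0 : EuclideanSpace ℝ (Fin n)) ∈ E := by
    rw [hE]; exact ⟨0, by simp, by simp⟩
  by_cases hlt : t < 1
  swap
  · -- `t ≥ 1` is contradictory
    exfalso
    have ht1 : 1 ≤ t := not_lt.1 hlt
    have hEsub : E ⊆ t • E := by
      intro e he
      refine ⟨t⁻¹ • e, ?_, by show t • t⁻¹ • e = e; rw [smul_smul, mul_inv_cancel₀ ht.ne', one_smul]⟩
      rw [hE] at he ⊢
      obtain ⟨y, hy, rfl⟩ := he
      refine ⟨t⁻¹ • y, ?_, (map_smul _ _ _)⟩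
      rw [Metric.mem_closedBall, dist_zero_right] at hy ⊢
      rw [norm_smul, norm_inv, Real.norm_eq_abs, abs_of_pos ht]
      calc t⁻¹ * ‖y‖ ≤ t⁻¹ * 1 := by
            have := inv_pos.2 ht
            nlinarith
        _ ≤ 1 := by rw [mul_one]; exact inv_le_one_of_one_le₀ ht1
    have hΩeq : Ω = E := subset_antisymm hΩE ((hEsub.trans htE))
    have hclopen : IsClopen Ω := ⟨hΩeq ▸ hEcomp.isClosed, hΩo⟩
    have huniv : Ω = univ := hclopen.eq_univ ⟨0, hΩeq ▸ h0E⟩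
    obtain ⟨C, hC⟩ := isBounded_iff_forall_norm_le.1 hΩb
    have hmem : EuclideanSpace.single (⟨0, hn⟩ : Fin n) (|C| + 1) ∈ Ω := huniv ▸ mem_univ _
    have h1 := hC _ hmem
    rw [EuclideanSpace.norm_single, Real.norm_eq_abs,
      abs_of_pos (by positivity : (0:ℝ) < |C| + 1)] at h1
    linarith [le_abs_self C]
  -- main case : 0 < t < 1
  rw [if_pos hlt]
  have h0Ω : (0 : EuclideanSpace ℝ (Fin n)) ∈ Ω := htE ⟨0, h0E, smul_zero t⟩
  have hAz := convex_nonpos_of_zero_frontier hn hΩo hΩb hv hvb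
  have hv0 : v 0 ≤ 0 := hAz 0 h0Ω
  have habs0 : |v 0| = -(v 0) := abs_of_nonpos hv0
  have httpos : 0 < t * (1 - t) := by nlinarith
  set R : ℝ := 2 * |v 0| / (t * (1 - t)) with hR
  have hRnn : 0 ≤ R := div_nonneg (by positivity) httpos.le
  -- subgradient bound
  have hsub : ∀ x ∈ t • Ω, ∀ z ∈ subgrad Ω v x, ∀ e ∈ E, ⟪z, e⟫ ≤ R := by
    rintro x ⟨w, hw, rfl⟩ z hz e heE
    have hte : t • e ∈ Ω := htE ⟨e, heE, rfl⟩
    have hxΩ : t • w ∈ Ω := htE ⟨w, hΩE hw, rfl⟩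
    have hnx : -(t • w) ∈ Ω := by
      have hwE : w ∈ E := hΩE hw
      rw [hE] at hwE
      obtain ⟨y, hy, rfl⟩ := hwE
      have hTy : T (-y) ∈ E := by rw [hE]; exact ⟨-y, by simpa using hy, rfl⟩
      refine htE ⟨T (-y), hTy, ?_⟩
      show t • T (-y) = -(t • T y)
      rw [map_neg, smul_neg]
    have hvx2 : 2 * v 0 ≤ v (t • w) := by
      have h00 : (1 / 2 : ℝ) • (t • w) + (1 / 2 : ℝ) • (-(t • w))
          = (0 : EuclideanSpace ℝ (Fin n)) := by module
      have hcx := hv.2 (subset_closure hxΩ) (subset_closure hnx)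
        (by norm_num : (0:ℝ) ≤ 1/2) (by norm_num : (0:ℝ) ≤ 1/2) (by norm_num)
      rw [h00] at hcx
      simp only [smul_eq_mul] at hcx
      have hneg := hAz _ hnx
      linarith
    set y := t • w + ((1 - t) * t) • e with hy
    have hyΩ : y ∈ Ω := by
      have hyy : y = t • w + (1 - t) • (t • e) := by rw [hy]; module
      rw [hyy]
      exact hΩc hw hte ht.le (by linarith) (by ring)
    have hyv : v y ≤ 0 := hAz y hyΩ
    have hkey := hz y hyΩ
    have hdiff : y - t • w = ((1 - t) * t) • e := by rw [hy]; abel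
    rw [hdiff, real_inner_smul_right] at hkey
    rw [hR, le_div_iff₀ httpos]
    nlinarith [hkey, hyv, hvx2]
  -- the adjoint map
  set A : EuclideanSpace ℝ (Fin n) →ₗ[ℝ] EuclideanSpace ℝ (Fin n) :=
    LinearMap.adjoint (T : EuclideanSpace ℝ (Fin n) →ₗ[ℝ] EuclideanSpace ℝ (Fin n)) with hA
  have hdeteq : LinearMap.det A
      = LinearMap.det (T : EuclideanSpace ℝ (Fin n) →ₗ[ℝ] EuclideanSpace ℝ (Fin n)) := by
    rw [hA, ← LinearMap.det_toMatrix (EuclideanSpace.basisFun (Fin n) ℝ).toBasis,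
      LinearMap.toMatrix_adjoint, Matrix.det_conjTranspose, star_trivial,
      LinearMap.det_toMatrix]
  have hdetT : LinearMap.det
      (T : EuclideanSpace ℝ (Fin n) →ₗ[ℝ] EuclideanSpace ℝ (Fin n)) ≠ 0 :=
    (LinearEquiv.isUnit_det' T).ne_zero
  have hdetA : LinearMap.det A ≠ 0 := by rw [hdeteq]; exact hdetT
  -- union of subgradients is contained in a preimage of a ball
  have hUsub : (⋃ x ∈ t • Ω, subgrad Ω v x) ⊆ A ⁻¹' Metric.closedBall 0 R := by
    intro z hzU
    simp only [mem_iUnion] at hzU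
    obtain ⟨x, hx, hz⟩ := hzU
    have hinner : ∀ y : EuclideanSpace ℝ (Fin n), ‖y‖ ≤ 1 → ⟪A z, y⟫ ≤ R := by
      intro y hy
      have h1 : ⟪A z, y⟫ = ⟪z, T y⟫ := LinearMap.adjoint_inner_left _ _ _
      rw [h1]
      exact hsub x hx z hz _ (hE ▸ ⟨y, mem_closedBall_zero_iff.2 hy, rfl⟩)
    have hnorm : ‖A z‖ ≤ R := by
      rcases eq_or_ne (A z) 0 with h0 | h0
      · rw [h0, norm_zero]; exact hRnn
      · have hpos : 0 < ‖A z‖ := norm_pos_iff.2 h0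
        have h2 := hinner (‖A z‖⁻¹ • A z)
          (by rw [norm_smul, norm_inv, norm_norm, inv_mul_cancel₀ hpos.ne'])
        rw [real_inner_smul_right, real_inner_self_eq_norm_sq] at h2
        calc ‖A z‖ = ‖A z‖⁻¹ * ‖A z‖ ^ 2 := by field_simp
          _ ≤ R := h2
    exact mem_preimage.2 (mem_closedBall_zero_iff.2 hnorm)
  -- measure estimates
  have hmeas1 : maMeasure Ω v (t • Ω)
      ≤ ENNReal.ofReal |(LinearMap.det
          (T : EuclideanSpace ℝ (Fin n) →ₗ[ℝ] EuclideanSpace ℝ (Fin n)))⁻¹|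
        * (ENNReal.ofReal (R ^ n) * μB) := by
    calc maMeasure Ω v (t • Ω)
        ≤ μH[(n : ℝ)] (A ⁻¹' Metric.closedBall 0 R) := measure_mono hUsub
      _ = ENNReal.ofReal |(LinearMap.det A)⁻¹| * μH[(n : ℝ)] (Metric.closedBall 0 R) :=
          Measure.addHaar_preimage_linearMap _ hdetA _
      _ = _ := by
          rw [Measure.addHaar_closedBall _ _ hRnn, hfin, hdeteq, hμB]
  have hmeasE : μH[(n : ℝ)] Ω
      ≤ ENNReal.ofReal |LinearMap.det
          (T : EuclideanSpace ℝ (Fin n) →ₗ[ℝ] EuclideanSpace ℝ (Fin n))| * μB := by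
    calc μH[(n : ℝ)] Ω ≤ μH[(n : ℝ)] E := measure_mono hΩE
      _ = μH[(n : ℝ)] ((T : EuclideanSpace ℝ (Fin n) →ₗ[ℝ] EuclideanSpace ℝ (Fin n))
            '' Metric.closedBall 0 1) := by rw [hE]; rfl
      _ = ENNReal.ofReal |LinearMap.det
            (T : EuclideanSpace ℝ (Fin n) →ₗ[ℝ] EuclideanSpace ℝ (Fin n))|
            * μH[(n : ℝ)] (Metric.closedBall 0 1) :=
          Measure.addHaar_image_linearMap _ _ _
      _ = _ := by rw [Measure.addHaar_closedBall_eq_addHaar_ball, hμB]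
  set detT : ℝ := LinearMap.det
    (T : EuclideanSpace ℝ (Fin n) →ₗ[ℝ] EuclideanSpace ℝ (Fin n)) with hdetT'
  have hdetTabs : 0 < |detT| := abs_pos.2 hdetT
  have hchain : ENNReal.ofReal b * maMeasure Ω v Ω * μH[(n : ℝ)] Ω
      ≤ ENNReal.ofReal (R ^ n) * (μB * μB) := by
    calc ENNReal.ofReal b * maMeasure Ω v Ω * μH[(n : ℝ)] Ω
        ≤ maMeasure Ω v (t • Ω) * μH[(n : ℝ)] Ω := mul_le_mul_left hμb _
      _ ≤ (ENNReal.ofReal |detT⁻¹| * (ENNReal.ofReal (R ^ n) * μB))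
            * (ENNReal.ofReal |detT| * μB) := mul_le_mul' hmeas1 hmeasE
      _ = (ENNReal.ofReal |detT⁻¹| * ENNReal.ofReal |detT|)
            * (ENNReal.ofReal (R ^ n) * (μB * μB)) := by ring
      _ = ENNReal.ofReal (R ^ n) * (μB * μB) := by
          rw [← ENNReal.ofReal_mul (abs_nonneg _), abs_inv,
            inv_mul_cancel₀ hdetTabs.ne', ENNReal.ofReal_one, one_mul]
  have hRHSne : ENNReal.ofReal (R ^ n) * (μB * μB) ≠ ⊤ :=
    ENNReal.mul_ne_top ENNReal.ofReal_ne_top (ENNReal.mul_ne_top hμBne hμBne)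
  have hreal : b * (maMeasure Ω v Ω).toReal * (μH[(n : ℝ)] Ω).toReal
      ≤ R ^ n * (volB * volB) := by
    have h1 := ENNReal.toReal_mono hRHSne hchain
    rw [ENNReal.toReal_mul, ENNReal.toReal_mul, ENNReal.toReal_mul, ENNReal.toReal_mul,
      ENNReal.toReal_ofReal hb.le, ENNReal.toReal_ofReal (pow_nonneg hRnn n)] at h1
    exact h1
  set m' : ℝ := (maMeasure Ω v Ω).toReal with hm'
  set w' : ℝ := (μH[(n : ℝ)] Ω).toReal with hw'
  have hm0 : 0 ≤ m' := ENNReal.toReal_nonneg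
  have hw0 : 0 ≤ w' := ENNReal.toReal_nonneg
  have hXle : b * m' * w' / (volB * volB) ≤ R ^ n := by
    rw [div_le_iff₀ (by positivity)]
    linarith [hreal]
  have hX0 : 0 ≤ b * m' * w' / (volB * volB) := by positivity
  have hRle : (b * m' * w' / (volB * volB)) ^ ((1 : ℝ) / n) ≤ R := by
    have h2 : ((R : ℝ) ^ n) ^ ((1 : ℝ) / n) = R := by
      rw [← Real.rpow_natCast R n, ← Real.rpow_mul hRnn, mul_one_div,
        div_self hn0, Real.rpow_one]
    calc (b * m' * w' / (volB * volB)) ^ ((1 : ℝ) / n)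
        ≤ ((R : ℝ) ^ n) ^ ((1 : ℝ) / n) := Real.rpow_le_rpow hX0 hXle (by positivity)
      _ = R := h2
  have hexp : (b * m' * w' / (volB * volB)) ^ ((1 : ℝ) / n)
      = b ^ ((1 : ℝ) / n) * m' ^ ((1 : ℝ) / n) * w' ^ ((1 : ℝ) / n)
        / volB ^ ((2 : ℝ) / n) := by
    rw [Real.div_rpow (by positivity) (by positivity),
      Real.mul_rpow (by positivity) hw0, Real.mul_rpow hb.le hm0]
    congr 1
    rw [show volB * volB = volB ^ (2 : ℕ) by ring, ← Real.rpow_natCast volB 2,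
      ← Real.rpow_mul hvolBpos.le]
    rw [Nat.cast_ofNat, mul_one_div]
  have hfinal : t * (1 - t) / 2 * R = |v 0| := by
    rw [hR]
    field_simp [show (1 - t) ≠ 0 by linarith]
  calc t * (1 - t) / 2 * b ^ ((1 : ℝ) / n) / volB ^ ((2 : ℝ) / n)
        * w' ^ ((1 : ℝ) / n) * m' ^ ((1 : ℝ) / n)
      = t * (1 - t) / 2 * ((b * m' * w' / (volB * volB)) ^ ((1 : ℝ) / n)) := by
        rw [hexp]; ring
    _ ≤ t * (1 - t) / 2 * R := by
        have hc : 0 ≤ t * (1 - t) / 2 := by positivity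
        exact mul_le_mul_of_nonneg_left hRle hc
    _ = |v 0| := hfinal
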